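/- Theorem 1 (line graph case): Consider a GM on a path a_1,…,a_n (n≥2) with edge variables x_i∈{0,1} on edges {a_i,a_{i+1}}, endpoint factors given by entrywise-nonnegative vectors u,w∈ℝ² (f_1(x_1)=u_{x_1}, f_n(x_{n-1})=w_{x_{n-1}}) and internal factors given by entrywise-nonnegative real 2×2 matrices f_2,…,f_{n-1}, so that the partition function is Z = uᵀ f_2 ⋯ f_{n-1} w; assume Z > 0. Then there exist real 2×2 matrices G_{i,i+1}, G_{i+1,i} on each path edge with G_{i,i+1}ᵀG_{i+1,i}=I such that all gauge-transformed factors are entrywise nonnegative and the product of the transformed factors evaluated at the all-zero configuration equals Z; in particular, the optimal value of the G-MF optimization for this GM equals log Z. -/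

import Mathlib

/- STATEMENT 7: Theorem 1, line graph case.  A GM on a path with `k + 2`
vertices (`k` internal vertices carrying 2×2 matrix factors `g 0, …, g (k-1)`,
and endpoint factors given by nonnegative vectors `u, w ∈ ℝ²`) has partition
function `Z = uᵀ (g 0 ⋯ g (k-1)) w`.  The path has `k + 1` edges, edge `j`
joining vertex `j` to vertex `j+1`; a gauge assigns matrices
`A j = G_{j,j+1}` and `B j = G_{j+1,j}` to edge `j` with `(A j)ᵀ * B j = 1`.
The transformed endpoint factors are `(A 0)ᵀ u` and `(B (last))ᵀ w`, and the
transformed factor at internal vertex `i+1` is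
`(B i.castSucc)ᵀ * g i * A i.succ`.  If all factors are entrywise nonnegative
and `Z > 0`, there is a gauge making all transformed factors entrywise
nonnegative such that the product of the transformed factors at the all-zero
configuration equals `Z` (so the optimal G-MF value is exactly `log Z`). -/

open Matrix


noncomputable def lgPick (v y : Fin 2 → ℝ) : Fin 2 → ℝ :=
  if 0 < v 0 ∧ v 1 * y 0 ≤ v 0 * y 1 then ![0, 1] else ![1, 0]

lemma lgPick_nonneg (v y : Fin 2 → ℝ) : ∀ i, 0 ≤ lgPick v y i := by
  intro i; unfold lgPick; split <;> fin_cases i <;> norm_num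

lemma lgPick_snd_pos (v y : Fin 2 → ℝ) (hy : ∀ i, 0 ≤ y i)
    (hne : ¬(v 0 = 0 ∧ v 1 = 0)) (hv : ∀ i, 0 ≤ v i)
    (h : ¬(0 < v 0 ∧ v 1 * y 0 ≤ v 0 * y 1)) : 0 < v 1 := by
  push_neg at h
  rcases lt_or_ge 0 (v 0) with h0 | h0
  · have := h h0
    nlinarith [hy 0, hy 1, hv 1]
  · have hv0 : v 0 = 0 := le_antisymm h0 (hv 0)
    rcases (hv 1).lt_or_eq with h1 | h1
    · exact h1
    · exact absurd ⟨hv0, h1.symm⟩ hne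

lemma lgPick_det (v y : Fin 2 → ℝ) (hv : ∀ i, 0 ≤ v i) (hy : ∀ i, 0 ≤ y i)
    (hne : ¬(v 0 = 0 ∧ v 1 = 0)) :
    v 0 * lgPick v y 1 - v 1 * lgPick v y 0 ≠ 0 := by
  unfold lgPick
  split
  · rename_i h; simp only [Matrix.cons_val_one, Matrix.head_cons, Matrix.cons_val_zero]
    simpa using h.1.ne'
  · rename_i h
    have := lgPick_snd_pos v y hy hne hv h
    simp only [Matrix.cons_val_one, Matrix.head_cons, Matrix.cons_val_zero]
    intro hc; nlinarith

lemma lgPick_cone (v y : Fin 2 → ℝ) (hv : ∀ i, 0 ≤ v i) (hy : ∀ i, 0 ≤ y i)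
    (hne : ¬(v 0 = 0 ∧ v 1 = 0)) :
    ∃ α β : ℝ, 0 ≤ α ∧ 0 ≤ β ∧ ∀ i, y i = α * v i + β * lgPick v y i := by
  unfold lgPick
  split
  · rename_i h
    have h0 : v 0 ≠ 0 := h.1.ne'
    refine ⟨y 0 / v 0, (v 0 * y 1 - v 1 * y 0) / v 0, div_nonneg (hy 0) h.1.le,
      div_nonneg (by linarith [h.2]) h.1.le, ?_⟩
    intro i; fin_cases i <;> simp <;> field_simp <;> ring
  · rename_i h
    have h1 := lgPick_snd_pos v y hy hne hv h
    have h1' : v 1 ≠ 0 := h1.ne'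
    refine ⟨y 1 / v 1, (v 1 * y 0 - v 0 * y 1) / v 1, div_nonneg (hy 1) h1.le, ?_, ?_⟩
    · apply div_nonneg _ h1.le
      push_neg at h
      rcases lt_or_ge 0 (v 0) with h0 | h0
      · linarith [h h0]
      · have hv0 : v 0 = 0 := le_antisymm h0 (hv 0)
        rw [hv0]; nlinarith [hy 0]
    · intro i; fin_cases i <;> simp <;> field_simp <;> ring

noncomputable def lgA (v s : Fin 2 → ℝ) : Matrix (Fin 2) (Fin 2) ℝ :=
  !![v 0, s 0; v 1, s 1]

noncomputable def lgB (v s : Fin 2 → ℝ) : Matrix (Fin 2) (Fin 2) ℝ :=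
  (v 0 * s 1 - v 1 * s 0)⁻¹ • !![s 1, -(v 1); -(s 0), v 0]

lemma lgA_mul_B (v s : Fin 2 → ℝ) (hd : v 0 * s 1 - v 1 * s 0 ≠ 0) :
    (lgA v s)ᵀ * lgB v s = 1 := by
  have hd' : -(s 0 * v 1) + v 0 * s 1 ≠ 0 := by intro h; apply hd; linarith
  ext r c
  fin_cases r <;> fin_cases c <;>
    simp [lgA, lgB, Matrix.mul_apply, Fin.sum_univ_two, Matrix.one_apply,
      Matrix.transpose_apply, Matrix.vecHead, Matrix.vecTail] <;>
    field_simp <;> ring_nf <;> (rw [← neg_mul, ← add_mul]; exact mul_inv_cancel₀ hd')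

lemma lgB_mulVec_v (v s : Fin 2 → ℝ) (hd : v 0 * s 1 - v 1 * s 0 ≠ 0) :
    (lgB v s)ᵀ.mulVec v = ![1, 0] := by
  funext i
  fin_cases i <;>
    simp [lgB, Matrix.mulVec, dotProduct, Fin.sum_univ_two] <;> field_simp <;> ring

lemma lgB_mulVec_s (v s : Fin 2 → ℝ) (hd : v 0 * s 1 - v 1 * s 0 ≠ 0) :
    (lgB v s)ᵀ.mulVec s = ![0, 1] := by
  funext i
  fin_cases i <;>
    simp [lgB, Matrix.mulVec, dotProduct, Fin.sum_univ_two] <;> field_simp <;> ring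

lemma mul_lgA_col (Y : Matrix (Fin 2) (Fin 2) ℝ) (v s : Fin 2 → ℝ) (r c : Fin 2) :
    (Y * lgA v s) r c = if c = 0 then Y.mulVec v r else Y.mulVec s r := by
  fin_cases c <;>
    simp [lgA, Matrix.mul_apply, Matrix.mulVec, dotProduct, Fin.sum_univ_two]

lemma lgA_transpose_mulVec (v s u : Fin 2 → ℝ) (i : Fin 2) :
    (lgA v s)ᵀ.mulVec u i = if i = 0 then v ⬝ᵥ u else s ⬝ᵥ u := by
  fin_cases i <;>
    simp [lgA, Matrix.mulVec, dotProduct, Fin.sum_univ_two]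

lemma lgProd_nonneg (l : List (Matrix (Fin 2) (Fin 2) ℝ))
    (h : ∀ M ∈ l, ∀ a b, 0 ≤ M a b) : ∀ a b, 0 ≤ l.prod a b := by
  induction l with
  | nil => intro a b; rw [List.prod_nil, Matrix.one_apply]; split <;> norm_num
  | cons M t ih =>
    intro a b
    rw [List.prod_cons, Matrix.mul_apply]
    exact Finset.sum_nonneg fun j _ =>
      mul_nonneg (h M (by simp) a j) (ih (fun N hN => h N (by simp [hN])) j b)

noncomputable def lgS (k : ℕ) (g : Fin k → Matrix (Fin 2) (Fin 2) ℝ)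
    (v : ℕ → Fin 2 → ℝ) : ℕ → Fin 2 → ℝ
  | 0 => lgPick (v k) (v k)
  | (m+1) =>
    if h : m + 1 ≤ k then
      lgPick (v (k - (m+1))) ((g ⟨k - (m+1), by omega⟩).mulVec (lgS k g v m))
    else ![1, 0]

theorem line_graph_gmf_exact (k : ℕ) (u w : Fin 2 → ℝ)
    (hu : ∀ i, 0 ≤ u i) (hw : ∀ i, 0 ≤ w i)
    (g : Fin k → Matrix (Fin 2) (Fin 2) ℝ) (hg : ∀ i a b, 0 ≤ g i a b)
    (hZ : 0 < u ⬝ᵥ ((List.ofFn g).prod).mulVec w) :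
    ∃ A B : Fin (k + 1) → Matrix (Fin 2) (Fin 2) ℝ,
      (∀ j, (A j)ᵀ * B j = 1) ∧
      (∀ i, 0 ≤ ((A 0)ᵀ).mulVec u i) ∧
      (∀ (i : Fin k) (a b : Fin 2), 0 ≤ ((B i.castSucc)ᵀ * g i * A i.succ) a b) ∧
      (∀ i, 0 ≤ ((B (Fin.last k))ᵀ).mulVec w i) ∧
      ((A 0)ᵀ).mulVec u 0
          * (∏ i : Fin k, ((B i.castSucc)ᵀ * g i * A i.succ) 0 0)
          * ((B (Fin.last k))ᵀ).mulVec w 0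
        = u ⬝ᵥ ((List.ofFn g).prod).mulVec w := by
  classical
  set v : ℕ → Fin 2 → ℝ := fun j => (((List.ofFn g).drop j).prod).mulVec w with hvdef
  have hvk : v k = w := by
    rw [hvdef]
    simp only
    rw [List.drop_eq_nil_of_le (by simp), List.prod_nil, Matrix.one_mulVec]
  have hvstep : ∀ j (h : j < k), v j = (g ⟨j, h⟩).mulVec (v (j+1)) := by
    intro j h
    have h' : j < (List.ofFn g).length := by simp [h]
    rw [hvdef]
    simp only
    rw [List.drop_eq_getElem_cons h', List.prod_cons, List.getElem_ofFn,
      ← Matrix.mulVec_mulVec]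
  have hvnn : ∀ j i, 0 ≤ v j i := by
    intro j i
    rw [hvdef]
    simp only
    rw [Matrix.mulVec]
    exact Finset.sum_nonneg fun b _ =>
      mul_nonneg (lgProd_nonneg _ (fun M hM a b => by
        obtain ⟨i', hi'⟩ := List.mem_ofFn.mp (List.mem_of_mem_drop hM)
        exact hi' ▸ hg i' a b) i b) (hw b)
  have hvne : ∀ j, ¬(v j 0 = 0 ∧ v j 1 = 0) := by
    intro j hc
    have hv0 : v j = 0 := by
      funext i; fin_cases i
      · exact hc.1
      · exact hc.2
    have hsplit : (List.ofFn g).prod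
        = ((List.ofFn g).take j).prod * ((List.ofFn g).drop j).prod := by
      rw [← List.prod_append, List.take_append_drop]
    have hZ' : u ⬝ᵥ ((List.ofFn g).prod).mulVec w
        = u ⬝ᵥ ((List.ofFn g).take j).prod.mulVec (v j) := by
      rw [hsplit, ← Matrix.mulVec_mulVec, hvdef]
    rw [hZ', hv0] at hZ
    simp [Matrix.mulVec_zero] at hZ
  set s : ℕ → Fin 2 → ℝ := fun j => lgS k g v (k - j) with hsdef
  have hsk : s k = lgPick (v k) (v k) := by
    rw [hsdef]; simp [lgS]
  have hsnn : ∀ j i, 0 ≤ s j i := by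
    intro j i
    rw [hsdef]
    simp only
    generalize k - j = m
    cases m with
    | zero => exact lgPick_nonneg _ _ _
    | succ m =>
      rw [lgS]
      split
      · exact lgPick_nonneg _ _ _
      · fin_cases i <;> norm_num
  have hsstep : ∀ j (h : j < k),
      s j = lgPick (v j) ((g ⟨j, h⟩).mulVec (s (j+1))) := by
    intro j h
    have e1 : k - j = (k - (j+1)) + 1 := by omega
    have e2 : k - ((k - (j+1)) + 1) = j := by omega
    have hle : (k - (j+1)) + 1 ≤ k := by omega
    rw [hsdef]
    simp only
    rw [e1, lgS, dif_pos hle]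
    simp only [e2]
  have hynn : ∀ (j : ℕ) (h : j < k) i, 0 ≤ (g ⟨j, h⟩).mulVec (s (j+1)) i := by
    intro j h i
    rw [Matrix.mulVec]
    exact Finset.sum_nonneg fun b _ => mul_nonneg (hg _ i b) (hsnn _ b)
  have hd : ∀ j, j ≤ k → v j 0 * s j 1 - v j 1 * s j 0 ≠ 0 := by
    intro j hj
    rcases eq_or_lt_of_le hj with rfl | hjk
    · rw [hsk]
      exact lgPick_det _ _ (hvnn j) (hvnn j) (hvne j)
    · rw [hsstep j hjk]
      exact lgPick_det _ _ (hvnn j) (hynn j hjk) (hvne j)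
  have hcone : ∀ (j : ℕ) (h : j < k), ∃ α β : ℝ, 0 ≤ α ∧ 0 ≤ β ∧
      ∀ i, (g ⟨j, h⟩).mulVec (s (j+1)) i = α * v j i + β * s j i := by
    intro j h
    obtain ⟨α, β, hα, hβ, hco⟩ :=
      lgPick_cone (v j) ((g ⟨j, h⟩).mulVec (s (j+1))) (hvnn j) (hynn j h) (hvne j)
    exact ⟨α, β, hα, hβ, fun i => by rw [hco i, ← hsstep j h]⟩
  refine ⟨fun j => lgA (v j.1) (s j.1), fun j => lgB (v j.1) (s j.1), ?_, ?_, ?_, ?_, ?_⟩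
  · intro j
    exact lgA_mul_B _ _ (hd j.1 (by omega))
  · intro i
    beta_reduce
    rw [Fin.val_zero, lgA_transpose_mulVec]
    split
    · exact Finset.sum_nonneg fun b _ => mul_nonneg (hvnn 0 b) (hu b)
    · exact Finset.sum_nonneg fun b _ => mul_nonneg (hsnn 0 b) (hu b)
  · intro i a b
    beta_reduce
    simp only [Fin.coe_castSucc, Fin.val_succ]
    rw [mul_lgA_col]
    split
    · rw [← Matrix.mulVec_mulVec,
        show (g i).mulVec (v (i.1+1)) = v i.1 from (hvstep i.1 i.2).symm,
        lgB_mulVec_v _ _ (hd i.1 i.2.le)]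
      fin_cases a <;> norm_num
    · obtain ⟨α, β, hα, hβ, hco⟩ := hcone i.1 i.2
      rw [← Matrix.mulVec_mulVec,
        show (g i).mulVec (s (i.1+1)) = α • v i.1 + β • s i.1 from funext fun i' => by
          simp only [Pi.add_apply, Pi.smul_apply, smul_eq_mul]
          exact hco i',
        Matrix.mulVec_add, Matrix.mulVec_smul, Matrix.mulVec_smul,
        lgB_mulVec_v _ _ (hd i.1 i.2.le), lgB_mulVec_s _ _ (hd i.1 i.2.le)]
      fin_cases a <;> simp <;> positivity
  · intro i
    beta_reduce
    have hkw : (lgB (v k) (s k))ᵀ.mulVec w = ![1, 0] := by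
      rw [← hvk]
      exact lgB_mulVec_v _ _ (hd k le_rfl)
    rw [Fin.val_last, hkw]
    fin_cases i <;> norm_num
  · have h00 : ∀ i : Fin k,
        ((lgB (v i.castSucc.1) (s i.castSucc.1))ᵀ * g i * lgA (v i.succ.1) (s i.succ.1)) 0 0 = 1 := by
      intro i
      simp only [Fin.coe_castSucc, Fin.val_succ]
      rw [mul_lgA_col, if_pos rfl, ← Matrix.mulVec_mulVec,
        show (g i).mulVec (v (i.1+1)) = v i.1 from (hvstep i.1 i.2).symm,
        lgB_mulVec_v _ _ (hd i.1 i.2.le)]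
      norm_num
    have hkw : (lgB (v k) (s k))ᵀ.mulVec w = ![1, 0] := by
      rw [← hvk]
      exact lgB_mulVec_v _ _ (hd k le_rfl)
    beta_reduce
    rw [Fin.val_zero, lgA_transpose_mulVec, if_pos rfl]
    rw [Fin.val_last, hkw]
    rw [Finset.prod_congr rfl fun i _ => h00 i]
    simp only [Finset.prod_const_one, Matrix.cons_val_zero, mul_one]
    rw [show v 0 ⬝ᵥ u = u ⬝ᵥ v 0 from dotProduct_comm _ _, hvdef]
    simp only [List.drop_zero]
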